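/- (Null decomposition bounds the product) Let Ψ, Φ ∈ ℂ^N, ω ∈ ℝ^d a unit vector, and [Ψ]_± = Ψ ± ω_a γ^0 γ^a Ψ with gamma matrices satisfying the Clifford relations and (γ^μ)^* = -η_{μν}γ^ν. Then |Ψ^* γ^0 Φ| ≤ (1/4)( |[Ψ]_-| |[Φ]_-| + |[Ψ]_-| |[Φ]_+| + |[Ψ]_+| |[Φ]_-| ), and in particular |Ψ^* γ^0 Φ| ≤ C( |[Ψ]_-| |Φ| + |Ψ| |[Φ]_-| ) for an absolute constant C. -/

import Mathlib

open Matrix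

/-- Minkowski metric entries in `ℝ^{d+1}`, in `ℂ`. -/
noncomputable def minkEta (d : ℕ) (μ ν : Fin (d + 1)) : ℂ :=
  if μ = ν then (if μ = 0 then -1 else 1) else 0

/-- Euclidean (ℓ²) norm of a vector in `ℂ^N`. -/
noncomputable def evnorm {N : ℕ} (v : Fin N → ℂ) : ℝ :=
  Real.sqrt (∑ i, Complex.normSq (v i))

lemma evnorm_eq {N : ℕ} (v : Fin N → ℂ) :
    evnorm v = ‖(WithLp.equiv 2 (Fin N → ℂ)).symm v‖ := by
  rw [EuclideanSpace.norm_eq, evnorm]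
  congr 1
  refine Finset.sum_congr rfl fun i _ => ?_
  rw [← Complex.sq_norm]
  rfl

lemma dot_eq_inner {N : ℕ} (x z : Fin N → ℂ) :
    star x ⬝ᵥ z = inner (𝕜 := ℂ) ((WithLp.equiv 2 (Fin N → ℂ)).symm x)
      ((WithLp.equiv 2 (Fin N → ℂ)).symm z) := by
  rw [PiLp.inner_apply]
  simp only [RCLike.inner_apply']
  rfl

lemma cs_bound {N : ℕ} (x z : Fin N → ℂ) : ‖star x ⬝ᵥ z‖ ≤ evnorm x * evnorm z := by
  rw [dot_eq_inner, evnorm_eq, evnorm_eq]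
  exact norm_inner_le_norm _ _

lemma evnorm_nonneg {N : ℕ} (v : Fin N → ℂ) : 0 ≤ evnorm v := Real.sqrt_nonneg _

lemma evnorm_add_le {N : ℕ} (u v : Fin N → ℂ) : evnorm (u + v) ≤ evnorm u + evnorm v := by
  simp only [evnorm_eq]
  exact norm_add_le _ _

lemma star_mulVec_dot {N : ℕ} (M : Matrix (Fin N) (Fin N) ℂ) (v z : Fin N → ℂ) :
    star (M *ᵥ v) ⬝ᵥ z = star v ⬝ᵥ (Mᴴ *ᵥ z) := by
  rw [star_mulVec, ← dotProduct_mulVec]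

lemma sum_mulVec' {N : ℕ} {ι : Type*} (s : Finset ι) (M : ι → Matrix (Fin N) (Fin N) ℂ)
    (v : Fin N → ℂ) : (∑ a ∈ s, M a) *ᵥ v = ∑ a ∈ s, (M a) *ᵥ v := by
  ext i
  simp only [mulVec, dotProduct, Matrix.sum_apply, Finset.sum_apply, Finset.sum_mul]
  exact Finset.sum_comm

lemma evnorm_mulVec_sym_inv {N : ℕ} (M : Matrix (Fin N) (Fin N) ℂ)
    (hM : Mᴴ = M) (hM2 : M * M = 1) (v : Fin N → ℂ) : evnorm (M *ᵥ v) = evnorm v := by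
  have h : star (M *ᵥ v) ⬝ᵥ (M *ᵥ v) = star v ⬝ᵥ v := by
    rw [star_mulVec_dot, hM, mulVec_mulVec, hM2, one_mulVec]
  rw [evnorm_eq, evnorm_eq, @norm_eq_sqrt_re_inner ℂ, @norm_eq_sqrt_re_inner ℂ,
    ← dot_eq_inner, ← dot_eq_inner, h]

section facts
variable {d N : ℕ} (γ : Fin (d + 1) → Matrix (Fin N) (Fin N) ℂ)
    (hγ : ∀ μ ν, γ μ * γ ν + γ ν * γ μ
      = (-2 * minkEta d μ ν) • (1 : Matrix (Fin N) (Fin N) ℂ))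

include hγ

lemma h00 : γ 0 * γ 0 = 1 := by
  have h := hγ 0 0
  have : minkEta d 0 0 = -1 := by simp [minkEta]
  rw [this] at h
  have h2 : (2:ℂ) • (γ 0 * γ 0) = (2:ℂ) • (1 : Matrix (Fin N) (Fin N) ℂ) := by
    rw [two_smul, h]; norm_num
  exact smul_right_injective _ (two_ne_zero) h2

lemma hanti (a : Fin d) : γ a.succ * γ 0 = -(γ 0 * γ a.succ) := by
  have h := hγ 0 a.succ
  have : minkEta d 0 a.succ = 0 := by
    simp [minkEta, (Fin.succ_ne_zero a).symm]
  rw [this] at h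
  simp only [mul_zero, zero_smul] at h
  exact eq_neg_of_add_eq_zero_right h
  
end facts

section facts2
variable {d N : ℕ} (γ : Fin (d + 1) → Matrix (Fin N) (Fin N) ℂ)
    (hγ : ∀ μ ν, γ μ * γ ν + γ ν * γ μ
      = (-2 * minkEta d μ ν) • (1 : Matrix (Fin N) (Fin N) ℂ))
include hγ

lemma hab (a b : Fin d) : γ a.succ * γ b.succ + γ b.succ * γ a.succ
    = (-2 * if a = b then 1 else 0 : ℂ) • (1 : Matrix (Fin N) (Fin N) ℂ) := by
  have h := hγ a.succ b.succ
  have : minkEta d a.succ b.succ = if a = b then 1 else 0 := by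
    simp [minkEta, Fin.succ_inj, Fin.succ_ne_zero]
  rwa [this] at h

lemma term_lemma (a b : Fin d) :
    γ 0 * γ a.succ * (γ 0 * γ b.succ) = -(γ a.succ * γ b.succ) := by
  calc γ 0 * γ a.succ * (γ 0 * γ b.succ)
      = γ 0 * (γ a.succ * γ 0) * γ b.succ := by noncomm_ring
    _ = γ 0 * (-(γ 0 * γ a.succ)) * γ b.succ := by rw [hanti γ hγ a]
    _ = -((γ 0 * γ 0) * (γ a.succ * γ b.succ)) := by noncomm_ring
    _ = -(γ a.succ * γ b.succ) := by rw [h00 γ hγ, one_mul]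

end facts2

noncomputable def Amat {d N : ℕ} (γ : Fin (d + 1) → Matrix (Fin N) (Fin N) ℂ)
    (ω : Fin d → ℝ) : Matrix (Fin N) (Fin N) ℂ :=
  ∑ a, ((ω a : ℝ) : ℂ) • (γ 0 * γ a.succ)

section Afacts
variable {d N : ℕ} (γ : Fin (d + 1) → Matrix (Fin N) (Fin N) ℂ)
    (hγ : ∀ μ ν, γ μ * γ ν + γ ν * γ μ
      = (-2 * minkEta d μ ν) • (1 : Matrix (Fin N) (Fin N) ℂ))
    (hstar0 : (γ 0)ᴴ = γ 0)
    (hstara : ∀ μ : Fin (d + 1), μ ≠ 0 → (γ μ)ᴴ = -(γ μ))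
    (ω : Fin d → ℝ)

include hγ hstar0 hstara in
lemma Amat_herm : (Amat γ ω)ᴴ = Amat γ ω := by
  rw [Amat, conjTranspose_sum]
  refine Finset.sum_congr rfl fun a _ => ?_
  rw [conjTranspose_smul, conjTranspose_mul, hstar0,
    hstara a.succ (Fin.succ_ne_zero a), Complex.star_def, Complex.conj_ofReal,
    neg_mul, hanti γ hγ a, neg_neg]

include hγ in
lemma Amat_gamma : Amat γ ω * γ 0 = -(γ 0 * Amat γ ω) := by
  rw [Amat, Finset.sum_mul, Finset.mul_sum, ← Finset.sum_neg_distrib]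
  refine Finset.sum_congr rfl fun a _ => ?_
  rw [smul_mul_assoc, mul_smul_comm, ← smul_neg]
  congr 1
  rw [mul_assoc, hanti γ hγ a, mul_neg, ← mul_assoc]

include hγ in
lemma Amat_sq (hω : ∑ a, ω a ^ 2 = 1) : Amat γ ω * Amat γ ω = 1 := by
  set c : Fin d → ℂ := fun a => ((ω a : ℝ) : ℂ) with hc
  have hc2 : ∑ a, c a ^ 2 = 1 := by
    have : ((∑ a, ω a ^ 2 : ℝ) : ℂ) = ((1:ℝ) : ℂ) := by rw [hω]
    push_cast at this
    simpa [hc] using this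
  have expand : Amat γ ω * Amat γ ω
      = ∑ a, ∑ b, (c a * c b) • (γ 0 * γ a.succ * (γ 0 * γ b.succ)) := by
    rw [Amat, Finset.sum_mul_sum]
    refine Finset.sum_congr rfl fun a _ => Finset.sum_congr rfl fun b _ => ?_
    rw [smul_mul_assoc, mul_smul_comm, smul_smul]
  have expand2 : Amat γ ω * Amat γ ω
      = -∑ a, ∑ b, (c a * c b) • (γ a.succ * γ b.succ) := by
    rw [expand, ← Finset.sum_neg_distrib]
    refine Finset.sum_congr rfl fun a _ => ?_
    rw [← Finset.sum_neg_distrib]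
    refine Finset.sum_congr rfl fun b _ => ?_
    rw [term_lemma γ hγ a b, smul_neg]
  set S := ∑ a, ∑ b, (c a * c b) • (γ a.succ * γ b.succ) with hS
  have hswap : S = ∑ a, ∑ b, (c a * c b) • (γ b.succ * γ a.succ) := by
    rw [hS, Finset.sum_comm]
    refine Finset.sum_congr rfl fun a _ => Finset.sum_congr rfl fun b _ => ?_
    rw [mul_comm]
  have hSS : S + S = (-2 : ℂ) • (1 : Matrix (Fin N) (Fin N) ℂ) := by
    have hcomb : S + S = (∑ a, ∑ b, (c a * c b) • (γ a.succ * γ b.succ))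
        + ∑ a, ∑ b, (c a * c b) • (γ b.succ * γ a.succ) := by
      rw [← hS, ← hswap]
    rw [hcomb, ← Finset.sum_add_distrib]
    have : ∀ a : Fin d, ((∑ b, (c a * c b) • (γ a.succ * γ b.succ))
        + ∑ b, (c a * c b) • (γ b.succ * γ a.succ))
        = (-2 * c a ^ 2) • (1 : Matrix (Fin N) (Fin N) ℂ) := by
      intro a
      rw [← Finset.sum_add_distrib]
      have : ∀ b : Fin d, (c a * c b) • (γ a.succ * γ b.succ)
          + (c a * c b) • (γ b.succ * γ a.succ)
          = (c a * c b) • ((-2 * if a = b then 1 else 0 : ℂ)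
              • (1 : Matrix (Fin N) (Fin N) ℂ)) := by
        intro b
        rw [← smul_add, hab γ hγ a b]
      rw [Finset.sum_congr rfl fun b _ => this b]
      simp [smul_smul, mul_ite, Finset.sum_ite_eq, sq]
      ring_nf
    rw [Finset.sum_congr rfl fun a _ => this a, ← Finset.sum_smul]
    congr 1
    rw [← Finset.mul_sum, hc2, mul_one]
  have hS1 : S = -1 := by
    have h2 : (2:ℂ) • S = (2:ℂ) • (-1 : Matrix (Fin N) (Fin N) ℂ) := by
      rw [two_smul, hSS]
      simp
    exact smul_right_injective _ (two_ne_zero) h2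
  rw [expand2, hS1, neg_neg]

end Afacts

section key
variable {N : ℕ} (A g0 : Matrix (Fin N) (Fin N) ℂ)

lemma key_identity (hAg : A * g0 = -(g0 * A)) (hA2 : A * A = 1) :
    (1 - A) * (g0 * (1 - A)) + (1 - A) * (g0 * (1 + A)) + (1 + A) * (g0 * (1 - A))
      = (4 : ℂ) • g0 := by
  have e2 : A * (g0 * A) = -g0 := by
    rw [← mul_assoc, hAg, neg_mul, mul_assoc, hA2, mul_one]
  simp only [mul_sub, sub_mul, mul_add, add_mul, one_mul, mul_one, hAg, e2]
  module

end key

lemma evnorm_sub_le {N : ℕ} (u v : Fin N → ℂ) : evnorm (u - v) ≤ evnorm u + evnorm v := by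
  simp only [evnorm_eq]
  exact norm_sub_le _ _

/-- Null decomposition bounds the product: with `[Ψ]_± = Ψ ± ω_a γ^0 γ^a Ψ` for a
unit vector `ω`, one has
`|Ψ^* γ^0 Φ| ≤ (1/4)(|[Ψ]_-||[Φ]_-| + |[Ψ]_-||[Φ]_+| + |[Ψ]_+||[Φ]_-|)`,
and in particular `|Ψ^* γ^0 Φ| ≤ C(|[Ψ]_-||Φ| + |Ψ||[Φ]_-|)` for an absolute `C`. -/
theorem null_product_bound (d N : ℕ) (γ : Fin (d + 1) → Matrix (Fin N) (Fin N) ℂ)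
    (hγ : ∀ μ ν, γ μ * γ ν + γ ν * γ μ
      = (-2 * minkEta d μ ν) • (1 : Matrix (Fin N) (Fin N) ℂ))
    (hstar0 : (γ 0)ᴴ = γ 0)
    (hstara : ∀ μ : Fin (d + 1), μ ≠ 0 → (γ μ)ᴴ = -(γ μ))
    (ω : Fin d → ℝ) (hω : ∑ a, ω a ^ 2 = 1) (Ψ Φ : Fin N → ℂ) :
    ‖star Ψ ⬝ᵥ (γ 0).mulVec Φ‖ ≤
        (1 / 4) *
          (evnorm (Ψ - ∑ a, ((ω a : ℝ) : ℂ) • (γ 0 * γ a.succ).mulVec Ψ)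
              * evnorm (Φ - ∑ a, ((ω a : ℝ) : ℂ) • (γ 0 * γ a.succ).mulVec Φ)
            + evnorm (Ψ - ∑ a, ((ω a : ℝ) : ℂ) • (γ 0 * γ a.succ).mulVec Ψ)
              * evnorm (Φ + ∑ a, ((ω a : ℝ) : ℂ) • (γ 0 * γ a.succ).mulVec Φ)
            + evnorm (Ψ + ∑ a, ((ω a : ℝ) : ℂ) • (γ 0 * γ a.succ).mulVec Ψ)
              * evnorm (Φ - ∑ a, ((ω a : ℝ) : ℂ) • (γ 0 * γ a.succ).mulVec Φ)) ∧
      ∃ C > (0 : ℝ), ‖star Ψ ⬝ᵥ (γ 0).mulVec Φ‖ ≤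
        C * (evnorm (Ψ - ∑ a, ((ω a : ℝ) : ℂ) • (γ 0 * γ a.succ).mulVec Ψ) * evnorm Φ
          + evnorm Ψ * evnorm (Φ - ∑ a, ((ω a : ℝ) : ℂ) • (γ 0 * γ a.succ).mulVec Φ)) := by


  have hAH := Amat_herm γ hγ hstar0 hstara ω
  have hAg := Amat_gamma γ hγ ω
  have hA2 := Amat_sq γ hγ ω hω
  have h00' := h00 γ hγ
  set A := Amat γ ω with hA
  have hAv : ∀ v : Fin N → ℂ,
      (∑ a, ((ω a : ℝ) : ℂ) • (γ 0 * γ a.succ).mulVec v) = A *ᵥ v := by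
    intro v
    rw [hA, Amat, sum_mulVec']
    exact Finset.sum_congr rfl fun a _ => (smul_mulVec _ _ _).symm
  have hm : ∀ v : Fin N → ℂ,
      v - (∑ a, ((ω a : ℝ) : ℂ) • (γ 0 * γ a.succ).mulVec v) = (1 - A) *ᵥ v := by
    intro v; rw [hAv, sub_mulVec, one_mulVec]
  have hp : ∀ v : Fin N → ℂ,
      v + (∑ a, ((ω a : ℝ) : ℂ) • (γ 0 * γ a.succ).mulVec v) = (1 + A) *ᵥ v := by
    intro v; rw [hAv, add_mulVec, one_mulVec]
  rw [hm Ψ, hm Φ, hp Ψ, hp Φ]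
  -- conjTranspose of 1 ± A
  have hmH : (1 - A)ᴴ = 1 - A := by rw [conjTranspose_sub, conjTranspose_one, hAH]
  have hpH : (1 + A)ᴴ = 1 + A := by rw [conjTranspose_add, conjTranspose_one, hAH]
  have dot3 : ∀ Pε Pδ : Matrix (Fin N) (Fin N) ℂ,
      star (Pε *ᵥ Ψ) ⬝ᵥ (γ 0 *ᵥ (Pδ *ᵥ Φ)) = star Ψ ⬝ᵥ ((Pεᴴ * (γ 0 * Pδ)) *ᵥ Φ) := by
    intro Pε Pδ
    rw [star_mulVec_dot, mulVec_mulVec, mulVec_mulVec, mul_assoc]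
  set T1 := star ((1 - A) *ᵥ Ψ) ⬝ᵥ (γ 0 *ᵥ ((1 - A) *ᵥ Φ)) with hT1
  set T2 := star ((1 - A) *ᵥ Ψ) ⬝ᵥ (γ 0 *ᵥ ((1 + A) *ᵥ Φ)) with hT2
  set T3 := star ((1 + A) *ᵥ Ψ) ⬝ᵥ (γ 0 *ᵥ ((1 - A) *ᵥ Φ)) with hT3
  have identity : star Ψ ⬝ᵥ (γ 0).mulVec Φ = (1 / 4 : ℂ) * (T1 + T2 + T3) := by
    rw [hT1, hT2, hT3, dot3, dot3, dot3, hmH, hpH, ← dotProduct_add, ← dotProduct_add,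
      ← add_mulVec, ← add_mulVec, key_identity A (γ 0) hAg hA2, smul_mulVec,
      dotProduct_smul, smul_eq_mul, ← mul_assoc]
    norm_num
  have bound : ∀ x y : Fin N → ℂ,
      ‖star x ⬝ᵥ (γ 0 *ᵥ y)‖ ≤ evnorm x * evnorm y := by
    intro x y
    calc ‖star x ⬝ᵥ (γ 0 *ᵥ y)‖ ≤ evnorm x * evnorm (γ 0 *ᵥ y) := cs_bound _ _
      _ = evnorm x * evnorm y := by rw [evnorm_mulVec_sym_inv _ hstar0 h00']
  set e1 := evnorm ((1 - A) *ᵥ Ψ) with he1d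
  set e2 := evnorm ((1 + A) *ᵥ Ψ) with he2d
  set f1 := evnorm ((1 - A) *ᵥ Φ) with hf1d
  set f2 := evnorm ((1 + A) *ᵥ Φ) with hf2d
  have first : ‖star Ψ ⬝ᵥ (γ 0).mulVec Φ‖ ≤ (1 / 4) * (e1 * f1 + e1 * f2 + e2 * f1) := by
    rw [identity]
    have : ‖(1 / 4 : ℂ) * (T1 + T2 + T3)‖ = (1 / 4) * ‖T1 + T2 + T3‖ := by
      rw [norm_mul]; norm_num
    rw [this]
    have htri : ‖T1 + T2 + T3‖ ≤ ‖T1‖ + ‖T2‖ + ‖T3‖ :=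
      le_trans (norm_add_le _ _) (by linarith [norm_add_le T1 T2])
    have b1 := bound ((1 - A) *ᵥ Ψ) ((1 - A) *ᵥ Φ)
    have b2 := bound ((1 - A) *ᵥ Ψ) ((1 + A) *ᵥ Φ)
    have b3 := bound ((1 + A) *ᵥ Ψ) ((1 - A) *ᵥ Φ)
    have h14 : (0:ℝ) < 1/4 := by norm_num
    nlinarith [htri, b1, b2, b3]
  refine ⟨first, 1, one_pos, ?_⟩
  have hAΦ : evnorm (A *ᵥ Φ) = evnorm Φ := evnorm_mulVec_sym_inv A hAH hA2 Φ
  have hAΨ : evnorm (A *ᵥ Ψ) = evnorm Ψ := evnorm_mulVec_sym_inv A hAH hA2 Ψ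
  have hf2 : f2 ≤ 2 * evnorm Φ := by
    have : (1 + A) *ᵥ Φ = Φ + A *ᵥ Φ := by rw [add_mulVec, one_mulVec]
    calc f2 = evnorm (Φ + A *ᵥ Φ) := by rw [hf2d, this]
      _ ≤ evnorm Φ + evnorm (A *ᵥ Φ) := evnorm_add_le _ _
      _ = 2 * evnorm Φ := by rw [hAΦ]; ring
  have hf1 : f1 ≤ 2 * evnorm Φ := by
    have : (1 - A) *ᵥ Φ = Φ - A *ᵥ Φ := by rw [sub_mulVec, one_mulVec]
    calc f1 = evnorm (Φ - A *ᵥ Φ) := by rw [hf1d, this]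
      _ ≤ evnorm Φ + evnorm (A *ᵥ Φ) := evnorm_sub_le _ _
      _ = 2 * evnorm Φ := by rw [hAΦ]; ring
  have he2 : e2 ≤ 2 * evnorm Ψ := by
    have : (1 + A) *ᵥ Ψ = Ψ + A *ᵥ Ψ := by rw [add_mulVec, one_mulVec]
    calc e2 = evnorm (Ψ + A *ᵥ Ψ) := by rw [he2d, this]
      _ ≤ evnorm Ψ + evnorm (A *ᵥ Ψ) := evnorm_add_le _ _
      _ = 2 * evnorm Ψ := by rw [hAΨ]; ring
  have he1 : (0:ℝ) ≤ e1 := evnorm_nonneg _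
  have hfa : (0:ℝ) ≤ f1 := evnorm_nonneg _
  have hΦ : (0:ℝ) ≤ evnorm Φ := evnorm_nonneg _
  have hΨ : (0:ℝ) ≤ evnorm Ψ := evnorm_nonneg _
  calc ‖star Ψ ⬝ᵥ (γ 0).mulVec Φ‖ ≤ (1 / 4) * (e1 * f1 + e1 * f2 + e2 * f1) := first
    _ ≤ 1 * (e1 * evnorm Φ + evnorm Ψ * f1) := by nlinarith [hf2, hf1, he2]
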